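/- For every real objective vector g ∈ ℝ^{J×K}, the maximum of Σ_{j∈J} Σ_{k∈K} g_{jk} y_{jk} over the 0-1 feasible assignments y ∈ Y_i equals the maximum of the same linear objective over the polytope P = { y ∈ ℝ^{J×K}_{≥0} : l_k ≤ Σ_{j∈J} y_{jk} ≤ u_k for all k ∈ K, Σ_{k∈K} y_{jk} ≤ 1 for all j ∈ J }; that is, the LP relaxation of the maximum-deviation integer program has the same optimal value as the integer program. -/

import Mathlib

open Finset
open Module

/-- The band index set `K = {K⁻, …, -1, 0, 1, …, K⁺}`. -/
noncomputable def bands (Km Kp : ℤ) : Finset ℤ := Finset.Icc Km Kp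

/-- `Y_i`: the set of feasible 0-1 deviation assignments. -/
def memY (n : ℕ) (Km Kp : ℤ) (l u : ℤ → ℕ) (y : Fin n → ℤ → ℕ) : Prop :=
  (∀ j : Fin n, ∀ k ∈ bands Km Kp, y j k ≤ 1) ∧
  (∀ k ∈ bands Km Kp, l k ≤ ∑ j : Fin n, y j k ∧ ∑ j : Fin n, y j k ≤ u k) ∧
  (∀ j : Fin n, ∑ k ∈ bands Km Kp, y j k ≤ 1)



lemma kernel_exists {α β : Type*} [Fintype α] [DecidableEq α] [DecidableEq β]
    (F : Finset (α × β)) (hF : F.Nonempty) (R : Finset α) (C : Finset β)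
    (hR : ∀ j ∈ R, #(F.filter fun e => e.1 = j) ≠ 1)
    (hC : ∀ k ∈ C, #(F.filter fun e => e.2 = k) ≠ 1) :
    ∃ v : F → ℝ, v ≠ 0 ∧
      (∀ j ∈ R, ∑ e : F, (if (e : α × β).1 = j then v e else 0) = 0) ∧
      (∀ k ∈ C, ∑ e : F, (if (e : α × β).2 = k then v e else 0) = 0) := by
  classical
  set degR : α → ℕ := fun j => #(F.filter fun e => e.1 = j) with hdegR
  set degC : β → ℕ := fun k => #(F.filter fun e => e.2 = k) with hdegC
  set R' : Finset α := R.filter (fun j => 0 < degR j) with hR'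
  set C' : Finset β := C.filter (fun k => 0 < degC k) with hC'
  have hR2 : ∀ j ∈ R', 2 ≤ degR j := by
    intro j hj
    simp only [hR', mem_filter] at hj
    have h1 : degR j ≠ 1 := hR j hj.1
    have h2 := hj.2
    omega
  have hC2 : ∀ k ∈ C', 2 ≤ degC k := by
    intro k hk
    simp only [hC', mem_filter] at hk
    have h1 : degC k ≠ 1 := hC k hk.1
    have h2 := hk.2
    omega
  -- linear maps
  set rowMap : α → ((F → ℝ) →ₗ[ℝ] ℝ) :=
    fun j => ∑ e ∈ univ.filter (fun e : F => (e : α × β).1 = j), LinearMap.proj e with hrowMap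
  set colMap : β → ((F → ℝ) →ₗ[ℝ] ℝ) :=
    fun k => ∑ e ∈ univ.filter (fun e : F => (e : α × β).2 = k), LinearMap.proj e with hcolMap
  have rowMap_apply : ∀ j (v : F → ℝ),
      rowMap j v = ∑ e : F, (if (e : α × β).1 = j then v e else 0) := by
    intro j v
    simp only [hrowMap, LinearMap.sum_apply, Finset.sum_filter]
    refine Finset.sum_congr rfl fun e _ => ?_
    split <;> simp
  have colMap_apply : ∀ k (v : F → ℝ),
      colMap k v = ∑ e : F, (if (e : α × β).2 = k then v e else 0) := by
    intro k v
    simp only [hcolMap, LinearMap.sum_apply, Finset.sum_filter]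
    refine Finset.sum_congr rfl fun e _ => ?_
    split <;> simp
  set L : (F → ℝ) →ₗ[ℝ] ((R' → ℝ) × (C' → ℝ)) :=
    LinearMap.prod (LinearMap.pi fun j : R' => rowMap j.val)
      (LinearMap.pi fun k : C' => colMap k.val) with hL
  -- counting
  have hsumR : ∑ j ∈ R', degR j = #(F.filter fun e => e.1 ∈ R') := by
    rw [Finset.card_eq_sum_card_fiberwise (f := Prod.fst) (s := F.filter fun e => e.1 ∈ R') (t := R')
      (fun e he => (mem_filter.mp he).2)]
    refine Finset.sum_congr rfl fun j hj => ?_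
    rw [Finset.filter_filter]
    have hfe : ∀ a ∈ F, (a.1 ∈ R' ∧ a.1 = j) ↔ (a.1 = j) := by
      intro a _
      exact ⟨fun h => h.2, fun h => ⟨h ▸ hj, h⟩⟩
    rw [Finset.filter_congr hfe]
  have hsumC : ∑ k ∈ C', degC k = #(F.filter fun e => e.2 ∈ C') := by
    rw [Finset.card_eq_sum_card_fiberwise (f := Prod.snd) (s := F.filter fun e => e.2 ∈ C') (t := C')
      (fun e he => (mem_filter.mp he).2)]
    refine Finset.sum_congr rfl fun k hk => ?_
    rw [Finset.filter_filter]
    have hfe : ∀ a ∈ F, (a.2 ∈ C' ∧ a.2 = k) ↔ (a.2 = k) := by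
      intro a _
      exact ⟨fun h => h.2, fun h => ⟨h ▸ hk, h⟩⟩
    rw [Finset.filter_congr hfe]
  have hcod : finrank ℝ ((R' → ℝ) × (C' → ℝ)) = #R' + #C' := by
    rw [Module.finrank_prod, Module.finrank_pi, Module.finrank_pi, Fintype.card_coe,
      Fintype.card_coe]
  have hRsum2 : 2 * #R' ≤ ∑ j ∈ R', degR j := by
    calc 2 * #R' = #R' * 2 := by ring
    _ ≤ ∑ j ∈ R', degR j := by
      have := Finset.card_nsmul_le_sum R' degR 2 hR2
      simpa using this
  have hCsum2 : 2 * #C' ≤ ∑ k ∈ C', degC k := by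
    calc 2 * #C' = #C' * 2 := by ring
    _ ≤ ∑ k ∈ C', degC k := by
      have := Finset.card_nsmul_le_sum C' degC 2 hC2
      simpa using this
  have hrank : finrank ℝ (LinearMap.range L) < #F := by
    by_cases hcase : ∀ e ∈ F, e.1 ∈ R' ∧ e.2 ∈ C'
    · -- Case A
      have hfullR : F.filter (fun e => e.1 ∈ R') = F :=
        Finset.filter_true_of_mem (fun e he => (hcase e he).1)
      have hfullC : F.filter (fun e => e.2 ∈ C') = F :=
        Finset.filter_true_of_mem (fun e he => (hcase e he).2)
      have hRF : 2 * #R' ≤ #F := by rw [← hfullR]; omega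
      have hCF : 2 * #C' ≤ #F := by rw [← hfullC]; omega
      -- R' nonempty
      obtain ⟨e0, he0⟩ := hF
      have hR'ne : e0.1 ∈ R' := (hcase e0 he0).1
      -- the dependency functional
      set σ : ((R' → ℝ) × (C' → ℝ)) →ₗ[ℝ] ℝ :=
        (∑ j : R', LinearMap.proj j).comp (LinearMap.fst ℝ _ _) -
        (∑ k : C', LinearMap.proj k).comp (LinearMap.snd ℝ _ _) with hσ
    -- σ ∘ L = 0
      have hσL : ∀ v : F → ℝ, σ (L v) = 0 := by
        intro v
        have h1 : ∀ (G : Finset (α × β)) (w : G → ℝ) (S : Finset α),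
            (∀ e ∈ G, e.1 ∈ S) →
            ∑ j ∈ S, ∑ e : G, (if (e : α × β).1 = j then w e else 0) = ∑ e : G, w e := by
          intro G w S hGS
          rw [Finset.sum_comm]
          refine Finset.sum_congr rfl fun e _ => ?_
          rw [Finset.sum_ite_eq S (e : α × β).1 (fun _ => w e), if_pos (hGS e e.2)]
        have h2 : ∀ (G : Finset (α × β)) (w : G → ℝ) (S : Finset β),
            (∀ e ∈ G, e.2 ∈ S) →
            ∑ k ∈ S, ∑ e : G, (if (e : α × β).2 = k then w e else 0) = ∑ e : G, w e := by
          intro G w S hGS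
          rw [Finset.sum_comm]
          refine Finset.sum_congr rfl fun e _ => ?_
          rw [Finset.sum_ite_eq S (e : α × β).2 (fun _ => w e), if_pos (hGS e e.2)]
        have e1 : σ (L v) = ∑ j : R', rowMap j.val v - ∑ k : C', colMap k.val v := by
          simp [hσ, hL, LinearMap.sum_apply]
        rw [e1]
        have e2 : ∑ j : R', rowMap j.val v = ∑ e : F, v e := by
          rw [Finset.sum_coe_sort R' (fun j => rowMap j v)]
          calc ∑ j ∈ R', rowMap j v
              = ∑ j ∈ R', ∑ e : F, (if (e : α × β).1 = j then v e else 0) := by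
                exact Finset.sum_congr rfl fun j _ => rowMap_apply j v
            _ = ∑ e : F, v e := h1 F v R' (fun e he => (hcase e he).1)
        have e3 : ∑ k : C', colMap k.val v = ∑ e : F, v e := by
          rw [Finset.sum_coe_sort C' (fun k => colMap k v)]
          calc ∑ k ∈ C', colMap k v
              = ∑ k ∈ C', ∑ e : F, (if (e : α × β).2 = k then v e else 0) := by
                exact Finset.sum_congr rfl fun k _ => colMap_apply k v
            _ = ∑ e : F, v e := h2 F v C' (fun e he => (hcase e he).2)
        rw [e2, e3, sub_self]
      have hrange : LinearMap.range L ≤ LinearMap.ker σ := by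
        rintro x ⟨v, rfl⟩
        exact hσL v
      have hσne : σ ≠ 0 := by
        intro h
        have : σ (Pi.single ⟨e0.1, hR'ne⟩ 1, 0) = 0 := by rw [h]; rfl
        rw [hσ] at this
        simp [LinearMap.sum_apply, Pi.single_apply] at this
      have hσsurj : Function.Surjective σ := LinearMap.surjective_of_ne_zero hσne
      have hkerσ : finrank ℝ (LinearMap.ker σ) + 1 = #R' + #C' := by
        have := LinearMap.finrank_range_add_finrank_ker σ
        rw [LinearMap.range_eq_top.mpr hσsurj, finrank_top, Module.finrank_self, hcod] at this
        omega
      have h4 : finrank ℝ (LinearMap.range L) ≤ finrank ℝ (LinearMap.ker σ) :=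
        Submodule.finrank_mono hrange
      have h5 : 0 < #R' := Finset.card_pos.mpr ⟨e0.1, hR'ne⟩
      omega
    · -- Case B
      push_neg at hcase
      obtain ⟨e0, he0F, he0⟩ := hcase
      have hsub : finrank ℝ (LinearMap.range L) ≤ #R' + #C' := by
        rw [← hcod]
        exact Submodule.finrank_le _
      have hbound : 2 * (#R' + #C') ≤ 2 * #F - 1 := by
        have hRle : #(F.filter fun e => e.1 ∈ R') ≤ #F := Finset.card_le_card (Finset.filter_subset _ _)
        have hCle : #(F.filter fun e => e.2 ∈ C') ≤ #F := Finset.card_le_card (Finset.filter_subset _ _)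
        rcases Classical.em (e0.1 ∈ R') with h1 | h1
        · have h2 : e0.2 ∉ C' := fun h => he0 h1 h
          have : F.filter (fun e => e.2 ∈ C') ⊆ F.erase e0 := by
            intro e he
            rw [Finset.mem_filter] at he
            refine Finset.mem_erase.mpr ⟨?_, he.1⟩
            intro h; subst h; exact h2 he.2
          have h3 : #(F.filter fun e => e.2 ∈ C') ≤ #F - 1 := by
            have := Finset.card_le_card this
            rw [Finset.card_erase_of_mem he0F] at this
            exact this
          have hFpos : 0 < #F := Finset.card_pos.mpr ⟨e0, he0F⟩
          omega
        · have : F.filter (fun e => e.1 ∈ R') ⊆ F.erase e0 := by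
            intro e he
            rw [Finset.mem_filter] at he
            refine Finset.mem_erase.mpr ⟨?_, he.1⟩
            intro h; subst h; exact h1 he.2
          have h3 : #(F.filter fun e => e.1 ∈ R') ≤ #F - 1 := by
            have := Finset.card_le_card this
            rw [Finset.card_erase_of_mem he0F] at this
            exact this
          have hFpos : 0 < #F := Finset.card_pos.mpr ⟨e0, he0F⟩
          omega
      have hFpos : 0 < #F := Finset.card_pos.mpr ⟨e0, he0F⟩
      omega
  -- extract kernel element
  have hker : LinearMap.ker L ≠ ⊥ := by
    intro h
    have := LinearMap.finrank_range_add_finrank_ker L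
    rw [h, finrank_bot, Module.finrank_pi, Fintype.card_coe] at this
    omega
  obtain ⟨v, hv, hv0⟩ := (Submodule.ne_bot_iff _).mp hker
  refine ⟨v, hv0, ?_, ?_⟩
  · intro j hj
    by_cases hj' : j ∈ R'
    · have h1 : (L v).1 ⟨j, hj'⟩ = 0 := by rw [LinearMap.mem_ker.mp hv]; rfl
      rw [← rowMap_apply]
      exact h1
    · -- degR j = 0
      have hd0 : degR j = 0 := by
        simp only [hR', mem_filter] at hj'
        by_contra h
        exact hj' ⟨hj, Nat.pos_of_ne_zero h⟩
      rw [Finset.card_eq_zero] at hd0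
      apply Finset.sum_eq_zero
      intro e _
      rw [if_neg]
      intro h
      have : (e : α × β) ∈ F.filter fun e => e.1 = j := mem_filter.mpr ⟨e.2, h⟩
      rw [hd0] at this
      exact absurd this (notMem_empty _)
  · intro k hk
    by_cases hk' : k ∈ C'
    · have h1 : (L v).2 ⟨k, hk'⟩ = 0 := by rw [LinearMap.mem_ker.mp hv]; rfl
      rw [← colMap_apply]
      exact h1
    · have hd0 : degC k = 0 := by
        simp only [hC', mem_filter] at hk'
        by_contra h
        exact hk' ⟨hk, Nat.pos_of_ne_zero h⟩
      rw [Finset.card_eq_zero] at hd0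
      apply Finset.sum_eq_zero
      intro e _
      rw [if_neg]
      intro h
      have : (e : α × β) ∈ F.filter fun e => e.2 = k := mem_filter.mpr ⟨e.2, h⟩
      rw [hd0] at this
      exact absurd this (notMem_empty _)


def IsIntR (x : ℝ) : Prop := ∃ z : ℤ, x = (z : ℝ)

lemma IsIntR_sum {γ : Type*} {s : Finset γ} {f : γ → ℝ} (h : ∀ x ∈ s, IsIntR (f x)) :
    IsIntR (∑ x ∈ s, f x) := by
  classical
  induction s using Finset.induction_on with
  | empty => exact ⟨0, by simp⟩
  | @insert a s' hx ih =>
    obtain ⟨za, hza⟩ := h a (mem_insert_self a s')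
    obtain ⟨zs, hzs⟩ := ih (fun x hx => h x (mem_insert_of_mem hx))
    exact ⟨za + zs, by rw [Finset.sum_insert hx, hza, hzs]; push_cast; ring⟩

lemma IsIntR_of_sub {x t : ℝ} (ht : IsIntR t) (h : IsIntR (t - x)) : IsIntR x := by
  obtain ⟨a, ha⟩ := ht; obtain ⟨b, hb⟩ := h
  exact ⟨a - b, by push_cast; linarith⟩

lemma lt_ceil_of_not_int {x : ℝ} (h : ¬ IsIntR x) : (⌊x⌋ : ℝ) < x ∧ x < (⌈x⌉ : ℝ) := by
  constructor
  · rcases lt_or_eq_of_le (Int.floor_le x) with h' | h'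
    · exact h'
    · exact absurd ⟨⌊x⌋, h'.symm⟩ h
  · rcases lt_or_eq_of_le (Int.le_ceil x) with h' | h'
    · exact h'
    · exact absurd ⟨⌈x⌉, h'⟩ h

open Classical in
noncomputable def FrS (n : ℕ) (Km Kp : ℤ) (y : Fin n → ℤ → ℝ) : Finset (Fin n × ℤ) :=
  (univ ×ˢ bands Km Kp).filter (fun e => ¬ IsIntR (y e.1 e.2))

open Classical in
noncomputable def tightR (n : ℕ) (Km Kp : ℤ) (y : Fin n → ℤ → ℝ) : Finset (Fin n) :=
  univ.filter (fun j => ∑ k ∈ bands Km Kp, y j k = 1)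

open Classical in
noncomputable def tightC (n : ℕ) (Km Kp : ℤ) (l u : ℤ → ℕ) (y : Fin n → ℤ → ℝ) : Finset ℤ :=
  (bands Km Kp).filter
    (fun k => (∑ j : Fin n, y j k) = (l k : ℝ) ∨ (∑ j : Fin n, y j k) = (u k : ℝ))

noncomputable def measureLP (n : ℕ) (Km Kp : ℤ) (l u : ℤ → ℕ) (y : Fin n → ℤ → ℝ) : ℕ :=
  #(FrS n Km Kp y) + (n - #(tightR n Km Kp y)) + (#(bands Km Kp) - #(tightC n Km Kp l u y))

def feasLP (n : ℕ) (Km Kp : ℤ) (l u : ℤ → ℕ) (y : Fin n → ℤ → ℝ) : Prop :=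
  (∀ j : Fin n, ∀ k ∈ bands Km Kp, 0 ≤ y j k) ∧
  (∀ k ∈ bands Km Kp, (l k : ℝ) ≤ ∑ j : Fin n, y j k ∧ ∑ j : Fin n, y j k ≤ (u k : ℝ)) ∧
  (∀ j : Fin n, ∑ k ∈ bands Km Kp, y j k ≤ 1)

noncomputable def valLP (n : ℕ) (Km Kp : ℤ) (g : Fin n → ℤ → ℝ) (y : Fin n → ℤ → ℝ) : ℝ :=
  ∑ j : Fin n, ∑ k ∈ bands Km Kp, g j k * y j k

lemma mem_FrS {n : ℕ} {Km Kp : ℤ} {y : Fin n → ℤ → ℝ} {e : Fin n × ℤ} :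
    e ∈ FrS n Km Kp y ↔ e.2 ∈ bands Km Kp ∧ ¬ IsIntR (y e.1 e.2) := by
  classical
  rw [FrS, Finset.mem_filter, Finset.mem_product]
  constructor
  · rintro ⟨⟨_, h2⟩, h3⟩; exact ⟨h2, h3⟩
  · rintro ⟨h2, h3⟩; exact ⟨⟨Finset.mem_univ _, h2⟩, h3⟩

lemma mem_tightR {n : ℕ} {Km Kp : ℤ} {y : Fin n → ℤ → ℝ} {j : Fin n} :
    j ∈ tightR n Km Kp y ↔ ∑ k ∈ bands Km Kp, y j k = 1 := by
  classical
  rw [tightR, Finset.mem_filter]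
  simp

lemma mem_tightC {n : ℕ} {Km Kp : ℤ} {l u : ℤ → ℕ} {y : Fin n → ℤ → ℝ} {k : ℤ} :
    k ∈ tightC n Km Kp l u y ↔ k ∈ bands Km Kp ∧
      ((∑ j : Fin n, y j k) = (l k : ℝ) ∨ (∑ j : Fin n, y j k) = (u k : ℝ)) := by
  classical
  rw [tightC, Finset.mem_filter]

set_option maxHeartbeats 1000000 in
lemma step_dir (n : ℕ) (Km Kp : ℤ) (l u : ℤ → ℕ) (g : Fin n → ℤ → ℝ)
    (y : Fin n → ℤ → ℝ) (hfeas : feasLP n Km Kp l u y)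
    (w : Fin n → ℤ → ℝ)
    (hw0 : ∀ e : Fin n × ℤ, e ∉ FrS n Km Kp y → w e.1 e.2 = 0)
    (hwne : ∃ e : Fin n × ℤ, w e.1 e.2 ≠ 0)
    (hwR : ∀ j ∈ tightR n Km Kp y, ∑ k ∈ bands Km Kp, w j k = 0)
    (hwC : ∀ k ∈ tightC n Km Kp l u y, ∑ j : Fin n, w j k = 0)
    (hg : 0 ≤ ∑ j : Fin n, ∑ k ∈ bands Km Kp, g j k * w j k) :
    ∃ y', feasLP n Km Kp l u y' ∧
      measureLP n Km Kp l u y' < measureLP n Km Kp l u y ∧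
      valLP n Km Kp g y ≤ valLP n Km Kp g y' := by
  classical
  obtain ⟨hpos, hcol, hrow⟩ := hfeas
  set B := bands Km Kp with hB
  set Fr := FrS n Km Kp y with hFr
  -- row and column sums of w and y
  set rs : Fin n → ℝ := fun j => ∑ k ∈ B, w j k with hrs
  set cs : ℤ → ℝ := fun k => ∑ j : Fin n, w j k with hcs
  set Sr : Fin n → ℝ := fun j => ∑ k ∈ B, y j k with hSr
  set Sc : ℤ → ℝ := fun k => ∑ j : Fin n, y j k with hSc
  -- event times
  set tE : Fin n × ℤ → ℝ := fun e =>
    if 0 < w e.1 e.2 then ((⌈y e.1 e.2⌉ : ℝ) - y e.1 e.2) / w e.1 e.2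
    else (y e.1 e.2 - (⌊y e.1 e.2⌋ : ℝ)) / (- w e.1 e.2) with htE
  set tC : ℤ → ℝ := fun k =>
    if 0 < cs k then ((u k : ℝ) - Sc k) / cs k else (Sc k - (l k : ℝ)) / (- cs k) with htC
  set tR : Fin n → ℝ := fun j => (1 - Sr j) / rs j with htR
  set T : Finset ℝ :=
    ((Fr.filter fun e => w e.1 e.2 ≠ 0).image tE) ∪
    ((B.filter fun k => cs k ≠ 0).image tC) ∪
    ((univ.filter fun j => 0 < rs j).image tR) with hT
  -- membership facts
  have hmemFr : ∀ e : Fin n × ℤ, e ∈ Fr ↔ (e.2 ∈ B ∧ ¬ IsIntR (y e.1 e.2)) := by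
    intro e; exact mem_FrS
  have hwFr : ∀ e : Fin n × ℤ, w e.1 e.2 ≠ 0 → e ∈ Fr := by
    intro e he
    by_contra h
    exact he (hw0 e h)
  -- tight columns have cs = 0, etc.; slack bounds
  have hslackC : ∀ k ∈ B, cs k ≠ 0 → (l k : ℝ) < Sc k ∧ Sc k < (u k : ℝ) := by
    intro k hk hcsk
    have hnt : k ∉ tightC n Km Kp l u y := fun h => hcsk (hwC k h)
    rw [mem_tightC] at hnt
    push_neg at hnt
    obtain ⟨h1, h2⟩ := hnt hk
    obtain ⟨hl, hu⟩ := hcol k hk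
    exact ⟨lt_of_le_of_ne hl (Ne.symm h1), lt_of_le_of_ne hu h2⟩
  have hslackR : ∀ j : Fin n, rs j ≠ 0 → Sr j < 1 := by
    intro j hj
    have hnt : j ∉ tightR n Km Kp y := fun h => hj (hwR j h)
    rw [mem_tightR] at hnt
    exact lt_of_le_of_ne (hrow j) hnt
  -- positivity of event times
  have hTpos : ∀ t ∈ T, 0 < t := by
    intro t ht
    rw [hT, Finset.mem_union, Finset.mem_union] at ht
    rcases ht with (ht | ht) | ht
    · obtain ⟨e, he, rfl⟩ := Finset.mem_image.mp ht
      rw [Finset.mem_filter] at he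
      obtain ⟨heF, hew⟩ := he
      obtain ⟨hfl, hce⟩ := lt_ceil_of_not_int ((hmemFr e).mp heF).2
      rw [htE]
      dsimp only
      split
      · apply div_pos (by linarith) (by assumption)
      · rename_i hn
        have : w e.1 e.2 < 0 := lt_of_le_of_ne (not_lt.mp hn) hew
        apply div_pos (by linarith) (by linarith)
    · obtain ⟨k, hk, rfl⟩ := Finset.mem_image.mp ht
      rw [Finset.mem_filter] at hk
      obtain ⟨hl, hu⟩ := hslackC k hk.1 hk.2
      rw [htC]
      dsimp only
      split
      · apply div_pos (by linarith) (by assumption)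
      · rename_i hn
        have : cs k < 0 := lt_of_le_of_ne (not_lt.mp hn) hk.2
        apply div_pos (by linarith) (by linarith)
    · obtain ⟨j, hj, rfl⟩ := Finset.mem_image.mp ht
      rw [Finset.mem_filter] at hj
      have := hslackR j (ne_of_gt hj.2)
      rw [htR]
      exact div_pos (by linarith) hj.2
  have hTne : T.Nonempty := by
    obtain ⟨e, he⟩ := hwne
    refine ⟨tE e, ?_⟩
    rw [hT]
    apply Finset.mem_union_left
    apply Finset.mem_union_left
    exact Finset.mem_image_of_mem tE (Finset.mem_filter.mpr ⟨hwFr e he, he⟩)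
  set ε : ℝ := T.min' hTne with hε
  have hεpos : 0 < ε := hTpos _ (T.min'_mem hTne)
  have hεle : ∀ t ∈ T, ε ≤ t := fun t ht => T.min'_le t ht
  set y' : Fin n → ℤ → ℝ := fun j k => y j k + ε * w j k with hy'
  -- per-entry bounds
  have hentryU : ∀ e : Fin n × ℤ, 0 < w e.1 e.2 → y' e.1 e.2 ≤ (⌈y e.1 e.2⌉ : ℝ) := by
    intro e hwe
    have hmem : tE e ∈ T := by
      rw [hT]
      exact Finset.mem_union_left _ (Finset.mem_union_left _
        (Finset.mem_image_of_mem tE (Finset.mem_filter.mpr ⟨hwFr e (ne_of_gt hwe), ne_of_gt hwe⟩)))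
    have h1 := hεle _ hmem
    rw [htE] at h1
    dsimp only at h1
    rw [if_pos hwe, le_div_iff₀ hwe] at h1
    rw [hy']
    dsimp only
    linarith
  have hentryL : ∀ e : Fin n × ℤ, w e.1 e.2 < 0 → (⌊y e.1 e.2⌋ : ℝ) ≤ y' e.1 e.2 := by
    intro e hwe
    have hmem : tE e ∈ T := by
      rw [hT]
      exact Finset.mem_union_left _ (Finset.mem_union_left _
        (Finset.mem_image_of_mem tE (Finset.mem_filter.mpr ⟨hwFr e (ne_of_lt hwe), ne_of_lt hwe⟩)))
    have h1 := hεle _ hmem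
    rw [htE] at h1
    dsimp only at h1
    rw [if_neg (not_lt.mpr (le_of_lt hwe)), le_div_iff₀ (by linarith : (0:ℝ) < - w e.1 e.2)] at h1
    rw [hy']
    dsimp only
    linarith
  -- nonnegativity
  have hpos' : ∀ j : Fin n, ∀ k ∈ B, 0 ≤ y' j k := by
    intro j k hk
    rcases lt_trichotomy (w j k) 0 with hw | hw | hw
    · have := hentryL (j, k) hw
      have hfl : (0:ℝ) ≤ (⌊y j k⌋ : ℝ) := by
        exact_mod_cast Int.floor_nonneg.mpr (hpos j k hk)
      linarith
    · rw [hy']; dsimp only; rw [hw]; simpa using hpos j k hk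
    · have h0 := hpos j k hk
      rw [hy']; dsimp only
      nlinarith
  -- sums
  have hSc' : ∀ k, ∑ j : Fin n, y' j k = Sc k + ε * cs k := by
    intro k
    rw [hy', hSc, hcs]
    dsimp only
    rw [Finset.sum_add_distrib, Finset.mul_sum]
  have hSr' : ∀ j, ∑ k ∈ B, y' j k = Sr j + ε * rs j := by
    intro j
    rw [hy', hSr, hrs]
    dsimp only
    rw [Finset.sum_add_distrib, Finset.mul_sum]
  -- column bounds
  have hcol' : ∀ k ∈ B, (l k : ℝ) ≤ ∑ j : Fin n, y' j k ∧ ∑ j : Fin n, y' j k ≤ (u k : ℝ) := by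
    intro k hk
    rw [hSc' k]
    rcases lt_trichotomy (cs k) 0 with hw | hw | hw
    · obtain ⟨hl1, hu1⟩ := hslackC k hk (ne_of_lt hw)
      have hmem : tC k ∈ T := by
        rw [hT]
        exact Finset.mem_union_left _ (Finset.mem_union_right _
          (Finset.mem_image_of_mem tC (Finset.mem_filter.mpr ⟨hk, ne_of_lt hw⟩)))
      have h1 := hεle _ hmem
      rw [htC] at h1
      dsimp only at h1
      rw [if_neg (not_lt.mpr (le_of_lt hw)), le_div_iff₀ (by linarith : (0:ℝ) < - cs k)] at h1
      constructor <;> nlinarith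
    · rw [hw]
      obtain ⟨h1, h2⟩ := hcol k hk
      constructor <;> [linarith; linarith]
    · obtain ⟨hl1, hu1⟩ := hslackC k hk (ne_of_gt hw)
      have hmem : tC k ∈ T := by
        rw [hT]
        exact Finset.mem_union_left _ (Finset.mem_union_right _
          (Finset.mem_image_of_mem tC (Finset.mem_filter.mpr ⟨hk, ne_of_gt hw⟩)))
      have h1 := hεle _ hmem
      rw [htC] at h1
      dsimp only at h1
      rw [if_pos hw, le_div_iff₀ hw] at h1
      constructor <;> nlinarith
  -- row bounds
  have hrow' : ∀ j : Fin n, ∑ k ∈ B, y' j k ≤ 1 := by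
    intro j
    rw [hSr' j]
    rcases lt_trichotomy (rs j) 0 with hw | hw | hw
    · have h3 : Sr j ≤ 1 := hrow j
      nlinarith
    · rw [hw]
      have h3 : Sr j ≤ 1 := hrow j
      linarith
    · have hmem : tR j ∈ T := by
        rw [hT]
        exact Finset.mem_union_right _
          (Finset.mem_image_of_mem tR (Finset.mem_filter.mpr ⟨Finset.mem_univ j, hw⟩))
      have h1 := hεle _ hmem
      rw [htR, le_div_iff₀ hw] at h1
      linarith
  have hfeas' : feasLP n Km Kp l u y' := ⟨hpos', hcol', hrow'⟩
  -- value
  have hval : valLP n Km Kp g y' = valLP n Km Kp g y +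
      ε * ∑ j : Fin n, ∑ k ∈ bands Km Kp, g j k * w j k := by
    rw [valLP, valLP, Finset.mul_sum, ← Finset.sum_add_distrib]
    refine Finset.sum_congr rfl fun j _ => ?_
    rw [Finset.mul_sum, ← Finset.sum_add_distrib]
    refine Finset.sum_congr rfl fun k _ => ?_
    rw [hy']
    ring
  have hvalle : valLP n Km Kp g y ≤ valLP n Km Kp g y' := by
    rw [hval]
    nlinarith
  -- tight preservation
  have htRsub : tightR n Km Kp y ⊆ tightR n Km Kp y' := by
    intro j hj
    rw [mem_tightR] at hj ⊢
    have h0 : rs j = 0 := hwR j (mem_tightR.mpr hj)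
    have h1 : Sr j = 1 := hj
    have h2 : (∑ k ∈ bands Km Kp, y' j k) = Sr j + ε * rs j := hSr' j
    rw [h2, h0, h1]; ring
  have htCsub : tightC n Km Kp l u y ⊆ tightC n Km Kp l u y' := by
    intro k hk
    have hk' := mem_tightC.mp hk
    rw [mem_tightC]
    refine ⟨hk'.1, ?_⟩
    have h0 : cs k = 0 := hwC k hk
    have h2 : (∑ j : Fin n, y' j k) = Sc k + ε * cs k := hSc' k
    rw [h2, h0]
    rcases hk'.2 with h | h
    · left; have h1 : Sc k = (l k : ℝ) := h; rw [h1]; ring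
    · right; have h1 : Sc k = (u k : ℝ) := h; rw [h1]; ring
  have hFrsub : FrS n Km Kp y' ⊆ Fr := by
    intro e he
    rw [mem_FrS] at he
    by_contra h
    have hw := hw0 e h
    have : IsIntR (y e.1 e.2) := by
      by_contra h2
      exact h ((hmemFr e).mpr ⟨he.1, h2⟩)
    apply he.2
    have : y' e.1 e.2 = y e.1 e.2 := by
      rw [hy']; dsimp only; rw [hw]; ring
    rw [this]
    assumption
  -- cardinal facts
  have hcardR : #(tightR n Km Kp y') ≤ n := by
    calc #(tightR n Km Kp y') ≤ #(univ : Finset (Fin n)) :=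
        Finset.card_le_card (Finset.subset_univ _)
    _ = n := by rw [Finset.card_univ, Fintype.card_fin]
  have hcardC : #(tightC n Km Kp l u y') ≤ #B := by
    apply Finset.card_le_card
    intro k hk
    exact (mem_tightC.mp hk).1
  have hcardR2 := Finset.card_le_card htRsub
  have hcardC2 := Finset.card_le_card htCsub
  have hcardF := Finset.card_le_card hFrsub
  -- the attained event
  have hεT : ε ∈ T := T.min'_mem hTne
  have hwC' : ∀ k ∈ tightC n Km Kp l u y, cs k = 0 := hwC
  have hwR' : ∀ j ∈ tightR n Km Kp y, rs j = 0 := hwR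
  have hSr'' : ∀ j : Fin n, (∑ k ∈ bands Km Kp, y' j k) = Sr j + ε * rs j := hSr'
  clear_value Fr rs cs Sr Sc tE tC tR T ε y'
  rw [hT, Finset.mem_union, Finset.mem_union] at hεT
  have hmeas : measureLP n Km Kp l u y' < measureLP n Km Kp l u y := by
    rcases hεT with (hev | hev) | hev
    · -- an entry becomes integral
      obtain ⟨e, he, heq⟩ := Finset.mem_image.mp hev
      rw [Finset.mem_filter] at he
      obtain ⟨heF, hew⟩ := he
      have hint : IsIntR (y' e.1 e.2) := by
        rcases lt_or_gt_of_ne hew with hw | hw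
        · have h2 : (y e.1 e.2 - (⌊y e.1 e.2⌋ : ℝ)) / (- w e.1 e.2) = ε := by
            rw [← heq, htE]; dsimp only; rw [if_neg (not_lt.mpr (le_of_lt hw))]
          have hne : -w e.1 e.2 ≠ 0 := by intro h; apply hew; linarith
          rw [div_eq_iff hne] at h2
          refine ⟨⌊y e.1 e.2⌋, ?_⟩
          rw [hy']; dsimp only
          nlinarith
        · have h2 : ((⌈y e.1 e.2⌉ : ℝ) - y e.1 e.2) / w e.1 e.2 = ε := by
            rw [← heq, htE]; dsimp only; rw [if_pos hw]
          rw [div_eq_iff hew] at h2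
          refine ⟨⌈y e.1 e.2⌉, ?_⟩
          rw [hy']; dsimp only
          nlinarith
      have hnotin : e ∉ FrS n Km Kp y' := by
        rw [mem_FrS]
        push_neg
        intro _
        simpa using hint
      have hss : FrS n Km Kp y' ⊂ Fr := ⟨hFrsub, fun h => hnotin (h heF)⟩
      have := Finset.card_lt_card hss
      rw [measureLP, measureLP, ← hFr, ← hB]
      omega
    · -- a column becomes tight
      obtain ⟨k, hk, heq⟩ := Finset.mem_image.mp hev
      rw [Finset.mem_filter] at hk
      obtain ⟨hkB, hkcs⟩ := hk
      have hknt : k ∉ tightC n Km Kp l u y := fun h => hkcs (hwC' k h)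
      have hkt : k ∈ tightC n Km Kp l u y' := by
        rw [mem_tightC]
        refine ⟨hkB, ?_⟩
        have h2' : (∑ j : Fin n, y' j k) = Sc k + ε * cs k := hSc' k
        rw [h2']
        rcases lt_or_gt_of_ne hkcs with hw | hw
        · left
          have h2 : (Sc k - (l k : ℝ)) / (- cs k) = ε := by
            rw [← heq, htC]; dsimp only; rw [if_neg (not_lt.mpr (le_of_lt hw))]
          have hne : -cs k ≠ 0 := by intro h; apply hkcs; linarith
          rw [div_eq_iff hne] at h2
          linarith
        · right
          have h2 : ((u k : ℝ) - Sc k) / cs k = ε := by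
            rw [← heq, htC]; dsimp only; rw [if_pos hw]
          rw [div_eq_iff (ne_of_gt hw)] at h2
          linarith
      have hss : tightC n Km Kp l u y ⊂ tightC n Km Kp l u y' :=
        ⟨htCsub, fun h => hknt (h hkt)⟩
      have := Finset.card_lt_card hss
      rw [measureLP, measureLP, ← hFr, ← hB]
      omega
    · -- a row becomes tight
      obtain ⟨j, hj, heq⟩ := Finset.mem_image.mp hev
      rw [Finset.mem_filter] at hj
      have hjrs := hj.2
      have hjnt : j ∉ tightR n Km Kp y := fun h => (ne_of_gt hjrs) (hwR' j h)
      have hjt : j ∈ tightR n Km Kp y' := by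
        rw [mem_tightR]
        have h2' := hSr'' j
        rw [h2']
        have h2 : (1 - Sr j) / rs j = ε := by rw [← heq, htR]
        rw [div_eq_iff (ne_of_gt hjrs)] at h2
        linarith
      have hss : tightR n Km Kp y ⊂ tightR n Km Kp y' := ⟨htRsub, fun h => hjnt (h hjt)⟩
      have := Finset.card_lt_card hss
      rw [measureLP, measureLP, ← hFr, ← hB]
      omega
  exact ⟨y', hfeas', hmeas, hvalle⟩


lemma row_fiber_sum {α β : Type*} [DecidableEq α] [DecidableEq β]
    (F : Finset (α × β)) (B : Finset β) (hFB : ∀ e ∈ F, e.2 ∈ B)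
    (f : α × β → ℝ) (hf : ∀ e, e ∉ F → f e = 0) (j : α) :
    ∑ k ∈ B, f (j, k) = ∑ e ∈ F, (if e.1 = j then f e else 0) := by
  classical
  have h1 : ∑ k ∈ B.filter (fun k => (j, k) ∈ F), f (j, k) = ∑ k ∈ B, f (j, k) := by
    apply Finset.sum_filter_of_ne
    intro k _ hne
    by_contra h
    exact hne (hf (j, k) h)
  have h2 : ∑ e ∈ F, (if e.1 = j then f e else 0) =
      ∑ e ∈ F.filter (fun e => e.1 = j), f e := (Finset.sum_filter _ _).symm
  rw [← h1, h2]
  apply Finset.sum_bij' (fun k _ => (j, k)) (fun e _ => e.2)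
  · intro k hk
    rw [Finset.mem_filter] at hk ⊢
    exact ⟨hk.2, rfl⟩
  · intro e he
    rw [Finset.mem_filter] at he ⊢
    have h3 : (j, e.2) = e := by rw [← he.2]
    exact ⟨hFB e he.1, by rw [h3]; exact he.1⟩
  · intro k hk; rfl
  · intro e he
    rw [Finset.mem_filter] at he
    rw [← he.2]
  · intro k hk; rfl

lemma col_fiber_sum {α β : Type*} [DecidableEq α] [DecidableEq β]
    (F : Finset (α × β)) (A : Finset α) (hFA : ∀ e ∈ F, e.1 ∈ A)
    (f : α × β → ℝ) (hf : ∀ e, e ∉ F → f e = 0) (k : β) :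
    ∑ j ∈ A, f (j, k) = ∑ e ∈ F, (if e.2 = k then f e else 0) := by
  classical
  have h1 : ∑ j ∈ A.filter (fun j => (j, k) ∈ F), f (j, k) = ∑ j ∈ A, f (j, k) := by
    apply Finset.sum_filter_of_ne
    intro j _ hne
    by_contra h
    exact hne (hf (j, k) h)
  have h2 : ∑ e ∈ F, (if e.2 = k then f e else 0) =
      ∑ e ∈ F.filter (fun e => e.2 = k), f e := (Finset.sum_filter _ _).symm
  rw [← h1, h2]
  apply Finset.sum_bij' (fun j _ => (j, k)) (fun e _ => e.1)
  · intro j hj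
    rw [Finset.mem_filter] at hj ⊢
    exact ⟨hj.2, rfl⟩
  · intro e he
    rw [Finset.mem_filter] at he ⊢
    have h3 : (e.1, k) = e := by rw [← he.2]
    exact ⟨hFA e he.1, by rw [h3]; exact he.1⟩
  · intro j hj; rfl
  · intro e he
    rw [Finset.mem_filter] at he
    rw [← he.2]
  · intro j hj; rfl

set_option maxHeartbeats 1000000 in
lemma step (n : ℕ) (Km Kp : ℤ) (l u : ℤ → ℕ) (g : Fin n → ℤ → ℝ)
    (y : Fin n → ℤ → ℝ) (hfeas : feasLP n Km Kp l u y)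
    (hFne : (FrS n Km Kp y).Nonempty) :
    ∃ y', feasLP n Km Kp l u y' ∧
      measureLP n Km Kp l u y' < measureLP n Km Kp l u y ∧
      valLP n Km Kp g y ≤ valLP n Km Kp g y' := by
  classical
  obtain ⟨hpos, hcol, hrow⟩ := hfeas
  set B := bands Km Kp with hB
  set Fr := FrS n Km Kp y with hFr
  -- degree conditions
  have hdegR : ∀ j ∈ tightR n Km Kp y, #(Fr.filter fun e => e.1 = j) ≠ 1 := by
    intro j hj hcard
    obtain ⟨e, he⟩ := Finset.card_eq_one.mp hcard
    have heF : e ∈ Fr ∧ e.1 = j := by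
      have : e ∈ Fr.filter fun e => e.1 = j := by rw [he]; exact Finset.mem_singleton_self e
      rw [Finset.mem_filter] at this; exact this
    have he2B : e.2 ∈ B := (mem_FrS.mp heF.1).1
    have hint : ∀ k ∈ B.erase e.2, IsIntR (y j k) := by
      intro k hk
      rw [Finset.mem_erase] at hk
      by_contra h
      have : (j, k) ∈ Fr.filter fun e => e.1 = j := by
        rw [Finset.mem_filter]
        exact ⟨mem_FrS.mpr ⟨hk.2, h⟩, rfl⟩
      rw [he, Finset.mem_singleton] at this
      apply hk.1
      rw [← this]
    have hsum : y j e.2 + ∑ k ∈ B.erase e.2, y j k = 1 := by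
      rw [Finset.add_sum_erase B (fun k => y j k) he2B]
      exact mem_tightR.mp hj
    have : IsIntR (y j e.2) := by
      apply IsIntR_of_sub (t := 1) ⟨1, by norm_num⟩
      have : (1 : ℝ) - y j e.2 = ∑ k ∈ B.erase e.2, y j k := by linarith
      rw [this]
      exact IsIntR_sum hint
    apply (mem_FrS.mp heF.1).2
    rw [heF.2]
    exact this
  have hdegC : ∀ k ∈ tightC n Km Kp l u y, #(Fr.filter fun e => e.2 = k) ≠ 1 := by
    intro k hk hcard
    obtain ⟨e, he⟩ := Finset.card_eq_one.mp hcard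
    have heF : e ∈ Fr ∧ e.2 = k := by
      have : e ∈ Fr.filter fun e => e.2 = k := by rw [he]; exact Finset.mem_singleton_self e
      rw [Finset.mem_filter] at this; exact this
    have hint : ∀ j ∈ Finset.univ.erase e.1, IsIntR (y j k) := by
      intro j hj
      rw [Finset.mem_erase] at hj
      by_contra h
      have : (j, k) ∈ Fr.filter fun e => e.2 = k := by
        rw [Finset.mem_filter]
        refine ⟨mem_FrS.mpr ⟨?_, h⟩, rfl⟩
        rw [← heF.2]
        exact (mem_FrS.mp heF.1).1
      rw [he, Finset.mem_singleton] at this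
      apply hj.1
      rw [← this]
    obtain ⟨hkB, hlor⟩ := mem_tightC.mp hk
    have hsum : y e.1 k + ∑ j ∈ Finset.univ.erase e.1, y j k = ∑ j : Fin n, y j k := by
      rw [Finset.add_sum_erase Finset.univ (fun j => y j k) (Finset.mem_univ e.1)]
    have hscint : IsIntR (∑ j : Fin n, y j k) := by
      rcases hlor with h | h
      · rw [h]; exact ⟨l k, by push_cast; ring⟩
      · rw [h]; exact ⟨u k, by push_cast; ring⟩
    have : IsIntR (y e.1 k) := by
      apply IsIntR_of_sub (t := ∑ j : Fin n, y j k) hscint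
      have h5 : (∑ j : Fin n, y j k) - y e.1 k = ∑ j ∈ Finset.univ.erase e.1, y j k := by
        linarith
      rw [h5]
      exact IsIntR_sum hint
    apply (mem_FrS.mp heF.1).2
    rw [heF.2]
    exact this
  -- apply the kernel lemma
  obtain ⟨v, hv0, hvR, hvC⟩ := kernel_exists Fr hFne (tightR n Km Kp y)
    (tightC n Km Kp l u y) hdegR hdegC
  set w : Fin n → ℤ → ℝ := fun j k => if h : (j, k) ∈ Fr then v ⟨(j, k), h⟩ else 0 with hwdef
  have hw0 : ∀ e : Fin n × ℤ, e ∉ Fr → w e.1 e.2 = 0 := by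
    intro e he
    rw [hwdef]
    exact dif_neg he
  have hveq : ∀ (e : Fin n × ℤ) (h : e ∈ Fr), w e.1 e.2 = v ⟨e, h⟩ := by
    intro e h
    rw [hwdef]
    exact dif_pos h
  have hwne : ∃ e : Fin n × ℤ, w e.1 e.2 ≠ 0 := by
    have h := Function.ne_iff.mp hv0
    obtain ⟨a, ha⟩ := h
    refine ⟨↑a, ?_⟩
    rw [hveq ↑a a.2]
    simpa using ha
  have hrowsum : ∀ j : Fin n, ∑ k ∈ B, w j k =
      ∑ e : Fr, (if (e : Fin n × ℤ).1 = j then v e else 0) := by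
    intro j
    have h1 := row_fiber_sum Fr B (fun e he => (mem_FrS.mp he).1)
      (fun e => w e.1 e.2) (fun e he => hw0 e he) j
    rw [h1, ← Finset.sum_attach Fr (fun e => if e.1 = j then w e.1 e.2 else 0)]
    refine Finset.sum_congr rfl fun e _ => ?_
    rw [hveq ↑e e.2]
  have hcolsum : ∀ k : ℤ, ∑ j : Fin n, w j k =
      ∑ e : Fr, (if (e : Fin n × ℤ).2 = k then v e else 0) := by
    intro k
    have h1 := col_fiber_sum Fr Finset.univ (fun e _ => Finset.mem_univ _)
      (fun e => w e.1 e.2) (fun e he => hw0 e he) k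
    rw [h1, ← Finset.sum_attach Fr (fun e => if e.2 = k then w e.1 e.2 else 0)]
    refine Finset.sum_congr rfl fun e _ => ?_
    rw [hveq ↑e e.2]
  have hwR : ∀ j ∈ tightR n Km Kp y, ∑ k ∈ bands Km Kp, w j k = 0 := by
    intro j hj
    rw [← hB, hrowsum j]
    exact hvR j hj
  have hwC : ∀ k ∈ tightC n Km Kp l u y, ∑ j : Fin n, w j k = 0 := by
    intro k hk
    rw [hcolsum k]
    exact hvC k hk
  rcases le_or_gt 0 (∑ j : Fin n, ∑ k ∈ bands Km Kp, g j k * w j k) with hg | hg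
  · exact step_dir n Km Kp l u g y ⟨hpos, hcol, hrow⟩ w hw0 hwne hwR hwC hg
  · refine step_dir n Km Kp l u g y ⟨hpos, hcol, hrow⟩ (fun j k => - w j k) ?_ ?_ ?_ ?_ ?_
    · intro e he
      rw [hw0 e he, neg_zero]
    · obtain ⟨e, he⟩ := hwne
      exact ⟨e, by simpa using he⟩
    · intro j hj
      rw [Finset.sum_neg_distrib, hwR j hj, neg_zero]
    · intro k hk
      rw [Finset.sum_neg_distrib, hwC k hk, neg_zero]
    · have : ∑ j : Fin n, ∑ k ∈ bands Km Kp, g j k * (- w j k) =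
          - ∑ j : Fin n, ∑ k ∈ bands Km Kp, g j k * w j k := by
        rw [← Finset.sum_neg_distrib]
        refine Finset.sum_congr rfl fun j _ => ?_
        rw [← Finset.sum_neg_distrib]
        refine Finset.sum_congr rfl fun k _ => ?_
        ring
      rw [this]
      linarith

lemma reduce (n : ℕ) (Km Kp : ℤ) (l u : ℤ → ℕ) (g : Fin n → ℤ → ℝ) :
    ∀ N : ℕ, ∀ y : Fin n → ℤ → ℝ, feasLP n Km Kp l u y → measureLP n Km Kp l u y ≤ N →
    ∃ y'', feasLP n Km Kp l u y'' ∧ FrS n Km Kp y'' = ∅ ∧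
      valLP n Km Kp g y ≤ valLP n Km Kp g y'' := by
  intro N
  induction N with
  | zero =>
    intro y hf hm
    refine ⟨y, hf, ?_, le_refl _⟩
    have h1 : #(FrS n Km Kp y) = 0 := by
      rw [measureLP] at hm
      omega
    exact Finset.card_eq_zero.mp h1
  | succ N ih =>
    intro y hf hm
    by_cases h : FrS n Km Kp y = ∅
    · exact ⟨y, hf, h, le_refl _⟩
    · obtain ⟨y', hf', hm', hv'⟩ := step n Km Kp l u g y hf (Finset.nonempty_of_ne_empty h)
      obtain ⟨y'', hf'', h0'', hv''⟩ := ih y' hf' (by omega)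
      exact ⟨y'', hf'', h0'', le_trans hv' hv''⟩

lemma extract (n : ℕ) (Km Kp : ℤ) (l u : ℤ → ℕ) (g : Fin n → ℤ → ℝ)
    (y : Fin n → ℤ → ℝ) (hf : feasLP n Km Kp l u y) (hFr : FrS n Km Kp y = ∅) :
    ∃ z : Fin n → ℤ → ℕ, memY n Km Kp l u z ∧
      valLP n Km Kp g y = ∑ j : Fin n, ∑ k ∈ bands Km Kp, g j k * (z j k : ℝ) := by
  classical
  obtain ⟨hpos, hcol, hrow⟩ := hf
  set z : Fin n → ℤ → ℕ := fun j k => if k ∈ bands Km Kp then (⌊y j k⌋).toNat else 0 with hz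
  have hcast : ∀ j : Fin n, ∀ k ∈ bands Km Kp, (z j k : ℝ) = y j k := by
    intro j k hk
    have hnotFr : (j, k) ∉ FrS n Km Kp y := by rw [hFr]; exact Finset.notMem_empty _
    rw [mem_FrS] at hnotFr
    push_neg at hnotFr
    obtain ⟨m, hm⟩ := hnotFr hk
    have hm0 : 0 ≤ m := by
      have := hpos j k hk
      rw [hm] at this
      exact_mod_cast this
    rw [hz]
    dsimp only
    rw [if_pos hk, hm, Int.floor_intCast]
    rw [show ((m.toNat : ℕ) : ℝ) = ((m.toNat : ℤ) : ℝ) by push_cast; ring, Int.toNat_of_nonneg hm0]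
  have hcastsum_col : ∀ k ∈ bands Km Kp, ((∑ j : Fin n, z j k : ℕ) : ℝ) = ∑ j : Fin n, y j k := by
    intro k hk
    push_cast
    exact Finset.sum_congr rfl fun j _ => hcast j k hk
  have hcastsum_row : ∀ j : Fin n, ((∑ k ∈ bands Km Kp, z j k : ℕ) : ℝ) = ∑ k ∈ bands Km Kp, y j k := by
    intro j
    push_cast
    exact Finset.sum_congr rfl fun k hk => hcast j k hk
  refine ⟨z, ⟨?_, ?_, ?_⟩, ?_⟩
  · intro j k hk
    have h1 : y j k ≤ 1 := by
      have h2 : ∑ k' ∈ bands Km Kp, y j k' ≤ 1 := hrow j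
      have h3 := Finset.single_le_sum (f := fun k' => y j k') (fun k' hk' => hpos j k' hk') hk
      linarith
    have h4 : (z j k : ℝ) ≤ 1 := by rw [hcast j k hk]; exact h1
    exact_mod_cast h4
  · intro k hk
    obtain ⟨h1, h2⟩ := hcol k hk
    rw [← hcastsum_col k hk] at h1 h2
    exact ⟨by exact_mod_cast h1, by exact_mod_cast h2⟩
  · intro j
    have h2 : ((∑ k ∈ bands Km Kp, z j k : ℕ) : ℝ) ≤ 1 := by
      rw [hcastsum_row j]; exact hrow j
    exact_mod_cast h2
  · rw [valLP]
    refine Finset.sum_congr rfl fun j _ => Finset.sum_congr rfl fun k hk => ?_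
    rw [hcast j k hk]

lemma exists_memY (n : ℕ) (Km Kp : ℤ) (l u : ℤ → ℕ)
    (hlu : ∀ k ∈ bands Km Kp, l k ≤ u k)
    (hl : ∑ k ∈ bands Km Kp, l k ≤ n) :
    ∃ y : Fin n → ℤ → ℕ, memY n Km Kp l u y := by
  classical
  set a : ℤ → ℕ := fun k => ∑ k' ∈ (bands Km Kp).filter (fun k' => k' < k), l k' with ha
  set y0 : Fin n → ℤ → ℕ := fun j k =>
    if (k ∈ bands Km Kp ∧ a k ≤ (j : ℕ) ∧ (j : ℕ) < a k + l k) then 1 else 0 with hy0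
  have hsubk : ∀ k ∈ bands Km Kp,
      insert k ((bands Km Kp).filter (fun k' => k' < k)) ⊆ bands Km Kp := by
    intro k hk x hx
    rcases Finset.mem_insert.mp hx with h | h
    · rw [h]; exact hk
    · exact (Finset.mem_filter.mp h).1
  have hknotin : ∀ k : ℤ, k ∉ (bands Km Kp).filter (fun k' => k' < k) := by
    intro k h
    exact lt_irrefl k (Finset.mem_filter.mp h).2
  have hbound : ∀ k ∈ bands Km Kp, a k + l k ≤ n := by
    intro k hk
    have h1 : a k + l k = ∑ k' ∈ insert k ((bands Km Kp).filter (fun k' => k' < k)), l k' := by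
      rw [Finset.sum_insert (hknotin k), ha]
      ring
    rw [h1]
    calc ∑ k' ∈ insert k ((bands Km Kp).filter (fun k' => k' < k)), l k'
        ≤ ∑ k' ∈ bands Km Kp, l k' := Finset.sum_le_sum_of_subset (hsubk k hk)
      _ ≤ n := hl
  have hmono : ∀ k1 ∈ bands Km Kp, ∀ k2, k1 < k2 → a k1 + l k1 ≤ a k2 := by
    intro k1 hk1 k2 h12
    have hsub : insert k1 ((bands Km Kp).filter (fun k' => k' < k1)) ⊆
        (bands Km Kp).filter (fun k' => k' < k2) := by
      intro x hx
      rcases Finset.mem_insert.mp hx with h | h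
      · rw [h]; exact Finset.mem_filter.mpr ⟨hk1, h12⟩
      · have := Finset.mem_filter.mp h
        exact Finset.mem_filter.mpr ⟨this.1, lt_trans this.2 h12⟩
    have h1 : a k1 + l k1 = ∑ k' ∈ insert k1 ((bands Km Kp).filter (fun k' => k' < k1)), l k' := by
      rw [Finset.sum_insert (hknotin k1), ha]; ring
    rw [h1, ha]
    exact Finset.sum_le_sum_of_subset hsub
  have hcount : ∀ k ∈ bands Km Kp, ∑ j : Fin n, y0 j k = l k := by
    intro k hk
    have h1 : ∀ j : Fin n, y0 j k = if (a k ≤ (j : ℕ) ∧ (j : ℕ) < a k + l k) then 1 else 0 := by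
      intro j
      simp [hy0, hk]
    rw [Finset.sum_congr rfl (fun j _ => h1 j), ← Finset.card_filter]
    have himg : (Finset.univ.filter fun j : Fin n => a k ≤ (j : ℕ) ∧ (j : ℕ) < a k + l k).image
        Fin.val = Finset.Ico (a k) (a k + l k) := by
      ext m
      simp only [Finset.mem_image, Finset.mem_filter, Finset.mem_univ, true_and,
        Finset.mem_Ico]
      constructor
      · rintro ⟨j, ⟨h1', h2'⟩, rfl⟩; exact ⟨h1', h2'⟩
      · rintro ⟨h1', h2'⟩
        exact ⟨⟨m, lt_of_lt_of_le h2' (hbound k hk)⟩, ⟨h1', h2'⟩, rfl⟩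
    have hcard := Finset.card_image_of_injective
      (Finset.univ.filter fun j : Fin n => a k ≤ (j : ℕ) ∧ (j : ℕ) < a k + l k)
      Fin.val_injective
    rw [himg, Nat.card_Ico] at hcard
    omega
  refine ⟨y0, ?_, ?_, ?_⟩
  · intro j k hk
    rw [hy0]
    dsimp only
    split <;> omega
  · intro k hk
    rw [hcount k hk]
    exact ⟨le_refl _, hlu k hk⟩
  · intro j
    have h1 : ∑ k ∈ bands Km Kp, y0 j k =
        #((bands Km Kp).filter fun k => k ∈ bands Km Kp ∧ a k ≤ (j : ℕ) ∧ (j : ℕ) < a k + l k) := by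
      rw [hy0]
      exact (Finset.card_filter _ _).symm
    rw [h1]
    rw [Finset.card_le_one]
    intro k1 hk1 k2 hk2
    rw [Finset.mem_filter] at hk1 hk2
    obtain ⟨hk1B, _, hk1a, hk1b⟩ := hk1
    obtain ⟨hk2B, _, hk2a, hk2b⟩ := hk2
    rcases lt_trichotomy k1 k2 with h | h | h
    · exfalso
      have := hmono k1 hk1B k2 h
      omega
    · exact h
    · exfalso
      have := hmono k2 hk2B k1 h
      omega

/-- for every real objective `g ∈ ℝ^{J×K}`, the maximum of
`∑_j ∑_k g_{jk} y_{jk}` over the 0-1 feasible assignments `Y_i` equals the maximum of the same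
linear objective over the LP relaxation polytope `P`; both maxima are attained and coincide. -/
theorem stmt_4 (n : ℕ) (hn : 0 < n) (Km Kp : ℤ) (hKm : Km < 0) (hKp : 0 < Kp)
    (d : Fin n → ℤ → ℝ) (hd0 : ∀ j : Fin n, d j 0 = 0)
    (l u : ℤ → ℕ)
    (hlu : ∀ k ∈ bands Km Kp, l k ≤ u k)
    (hun : ∀ k ∈ bands Km Kp, u k ≤ n)
    (hu0 : u 0 = n)
    (hl : ∑ k ∈ bands Km Kp, l k ≤ n)
    (g : Fin n → ℤ → ℝ) :
    ∃ M : ℝ,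
      IsGreatest {v : ℝ | ∃ y : Fin n → ℤ → ℕ, memY n Km Kp l u y ∧
          v = ∑ j : Fin n, ∑ k ∈ bands Km Kp, g j k * (y j k : ℝ)} M ∧
      IsGreatest {v : ℝ | ∃ y : Fin n → ℤ → ℝ,
          (∀ j : Fin n, ∀ k ∈ bands Km Kp, 0 ≤ y j k) ∧
          (∀ k ∈ bands Km Kp,
            (l k : ℝ) ≤ ∑ j : Fin n, y j k ∧ ∑ j : Fin n, y j k ≤ (u k : ℝ)) ∧
          (∀ j : Fin n, ∑ k ∈ bands Km Kp, y j k ≤ 1) ∧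
          v = ∑ j : Fin n, ∑ k ∈ bands Km Kp, g j k * y j k} M := by
  classical
  set Sint : Set ℝ := {v : ℝ | ∃ y : Fin n → ℤ → ℕ, memY n Km Kp l u y ∧
      v = ∑ j : Fin n, ∑ k ∈ bands Km Kp, g j k * (y j k : ℝ)} with hSint
  -- Sint is nonempty
  have hne : Sint.Nonempty := by
    obtain ⟨y0, hy0⟩ := exists_memY n Km Kp l u hlu hl
    exact ⟨_, y0, hy0, rfl⟩
  -- Sint is finite
  have hfin : Sint.Finite := by
    set G : (Fin n → {k // k ∈ bands Km Kp} → Bool) → ℝ := fun f =>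
      ∑ j : Fin n, ∑ k ∈ (bands Km Kp).attach, g j (k : ℤ) * (if f j k then 1 else 0) with hG
    apply Set.Finite.subset (Set.finite_range G)
    rintro v ⟨y, hy, rfl⟩
    refine ⟨fun j k => decide (y j (k : ℤ) = 1), ?_⟩
    rw [hG]
    dsimp only
    refine Finset.sum_congr rfl fun j _ => ?_
    rw [← Finset.sum_attach (bands Km Kp) (fun k => g j k * ((y j k : ℕ) : ℝ))]
    refine Finset.sum_congr rfl fun k _ => ?_
    congr 1
    have h01 : y j (k : ℤ) = 0 ∨ y j (k : ℤ) = 1 := by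
      have := hy.1 j (k : ℤ) k.2
      omega
    rcases h01 with h | h <;> simp [h]
  -- the greatest element of Sint
  obtain ⟨M, hMmem, hMmax⟩ := Set.Finite.exists_maximalFor id Sint hfin hne
  have hMub : ∀ v ∈ Sint, v ≤ M := by
    intro v hv
    rcases le_total v M with h | h
    · exact h
    · have := hMmax hv h
      simp only [id] at this
      exact this
  refine ⟨M, ⟨hMmem, hMub⟩, ?_, ?_⟩
  · -- M is attained in the LP polytope
    obtain ⟨ystar, hystar, hMval⟩ := hMmem
    refine ⟨fun j k => (ystar j k : ℝ), ?_, ?_, ?_, hMval⟩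
    · intro j k _
      positivity
    · intro k hk
      obtain ⟨h1, h2⟩ := hystar.2.1 k hk
      constructor
      · rw [show (∑ j : Fin n, ((ystar j k : ℕ) : ℝ)) = ((∑ j : Fin n, ystar j k : ℕ) : ℝ) by
          push_cast; ring]
        exact_mod_cast h1
      · rw [show (∑ j : Fin n, ((ystar j k : ℕ) : ℝ)) = ((∑ j : Fin n, ystar j k : ℕ) : ℝ) by
          push_cast; ring]
        exact_mod_cast h2
    · intro j
      have h1 := hystar.2.2 j
      rw [show (∑ k ∈ bands Km Kp, ((ystar j k : ℕ) : ℝ)) =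
          ((∑ k ∈ bands Km Kp, ystar j k : ℕ) : ℝ) by push_cast; ring]
      exact_mod_cast h1
  · -- M is an upper bound for the LP polytope
    rintro v ⟨y, h1, h2, h3, rfl⟩
    have hfeas : feasLP n Km Kp l u y := ⟨h1, h2, h3⟩
    obtain ⟨y'', hf'', hFr'', hval''⟩ :=
      reduce n Km Kp l u g (measureLP n Km Kp l u y) y hfeas (le_refl _)
    obtain ⟨z, hz, hzval⟩ := extract n Km Kp l u g y'' hf'' hFr''
    have hzin : (∑ j : Fin n, ∑ k ∈ bands Km Kp, g j k * (z j k : ℝ)) ∈ Sint := ⟨z, hz, rfl⟩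
    have := hMub _ hzin
    calc (∑ j : Fin n, ∑ k ∈ bands Km Kp, g j k * y j k) = valLP n Km Kp g y := rfl
      _ ≤ valLP n Km Kp g y'' := hval''
      _ = ∑ j : Fin n, ∑ k ∈ bands Km Kp, g j k * (z j k : ℝ) := hzval
      _ ≤ M := this
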